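/- For every integer n ≥ 1 and every word v = v₁v₂⋯vₙ in V, θ(v) = Σ_{σ ∈ Sₙ} v_{σ(1)}v_{σ(2)}⋯v_{σ(n)} · Π_{(i,j) ∈ Inv(σ)} q^{⟨v_{σ(i)}, v_{σ(j)}⟩}, where Sₙ is the symmetric group on {1,…,n} and Inv(σ) = {(i,j) : 1 ≤ i < j ≤ n, σ(i) > σ(j)} is the set of inversions of σ. -/

import Mathlib

noncomputable section
namespace SqPaper

/-- The two letters: `0 ↦ A`, `1 ↦ B`. -/
abbrev Ltr := Fin 2
def lA : Ltr := 0
def lB : Ltr := 1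

/-- The pairing `⟨ , ⟩` on letters: `⟨A,A⟩=⟨B,B⟩=2`, `⟨A,B⟩=⟨B,A⟩=-2`. -/
def brk (x y : Ltr) : ℤ := if x = y then 2 else -2

variable (F : Type*) [Field F]

/-- The free algebra `V` on the two generators, realized as the monoid algebra of the
free monoid on two letters; the words form the standard basis. -/
abbrev FA := MonoidAlgebra F (FreeMonoid Ltr)

/-- The standard basis vector attached to a word (list of letters). -/
def wd (l : List Ltr) : FA F := MonoidAlgebra.single (FreeMonoid.ofList l) 1

def Agen : FA F := wd F [lA]
def Bgen : FA F := wd F [lB]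

/-- View an element of `V` as a finitely supported function on words. -/
def fsp (v : FA F) : FreeMonoid Ltr →₀ F := v.coeff

/-- The symmetric bilinear form on `V` for which the standard basis of words is orthonormal. -/
def form (u v : FA F) : F := (fsp F u).sum fun w c => c * (fsp F v) w

/-- Extend a function on words to an `F`-linear map on `V`. -/
def mkMap {M : Type*} [AddCommMonoid M] [Module F M] (f : List Ltr → M) :
    FA F →ₗ[F] M :=
  Finsupp.lsum F (fun w => LinearMap.toSpanSingleton F M (f (FreeMonoid.toList w)))
    ∘ₗ (MonoidAlgebra.coeffLinearEquiv F).toLinearMap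

/-- `[3]_q = (q³ - q⁻³)/(q - q⁻¹)`. -/
def tri (q : F) : F := (q ^ 3 - q⁻¹ ^ 3) / (q - q⁻¹)

/-- The q-shuffle product on words. -/
def shufW (q : F) : List Ltr → List Ltr → FA F
  | [], v => wd F v
  | u, [] => wd F u
  | a :: u, b :: v =>
      wd F [a] * shufW q u (b :: v) +
        (q ^ (((a :: u).map (fun x => brk x b)).sum)) • (wd F [b] * shufW q (a :: u) v)
  termination_by u v => u.length + v.length

/-- The q-shuffle product `⋆` on `V`, as a bilinear map. -/
def qshuf (q : F) : FA F →ₗ[F] FA F →ₗ[F] FA F :=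
  mkMap F fun u => mkMap F fun v => shufW F q u v

/-- Iterated `⋆`-product of the letters of a word. -/
def thetaW (q : F) : List Ltr → FA F
  | [] => 1
  | a :: t => qshuf F q (wd F [a]) (thetaW q t)

/-- `θ : V → V`, the algebra homomorphism from the free algebra to the q-shuffle algebra
with `θ(A) = A`, `θ(B) = B`. -/
def theta (q : F) : FA F →ₗ[F] FA F := mkMap F fun l => thetaW F q l

/-- `A_L`, left multiplication by `A` in the free algebra. -/
def AL : FA F →ₗ[F] FA F := LinearMap.mulLeft F (Agen F)
def BL : FA F →ₗ[F] FA F := LinearMap.mulLeft F (Bgen F)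
def AR : FA F →ₗ[F] FA F := LinearMap.mulRight F (Agen F)
def BR : FA F →ₗ[F] FA F := LinearMap.mulRight F (Bgen F)

/-- `X*_L` (for the letter `x`): deletes the letter `x` from the front of a word. -/
def delL (x : Ltr) : FA F →ₗ[F] FA F :=
  mkMap F fun l => if l.head? = some x then wd F l.tail else 0

/-- `X*_R` (for the letter `x`): deletes the letter `x` from the end of a word. -/
def delR (x : Ltr) : FA F →ₗ[F] FA F :=
  mkMap F fun l => if l.getLast? = some x then wd F l.dropLast else 0

/-- `X_ℓ`: left q-shuffle multiplication by the letter `x`. -/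
def shL (q : F) (x : Ltr) : FA F →ₗ[F] FA F := qshuf F q (wd F [x])

/-- `X_r`: right q-shuffle multiplication by the letter `x`. -/
def shR (q : F) (x : Ltr) : FA F →ₗ[F] FA F := (qshuf F q).flip (wd F [x])

/-- `X*_ℓ`: the weighted deletion map, deleting an occurrence of the letter `x`
with weight `q^{⟨v₁,x⟩+⋯+⟨v_{i-1},x⟩}`. -/
def lowL (q : F) (x : Ltr) : FA F →ₗ[F] FA F :=
  mkMap F fun l =>
    ∑ i ∈ Finset.range l.length,
      if l[i]? = some x then
        (q ^ (((l.take i).map (fun y => brk y x)).sum)) • wd F (l.eraseIdx i)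
      else 0

/-- `X*_r`: the weighted deletion map, deleting an occurrence of the letter `x`
with weight `q^{⟨vₙ,x⟩+⋯+⟨v_{i+1},x⟩}`. -/
def lowR (q : F) (x : Ltr) : FA F →ₗ[F] FA F :=
  mkMap F fun l =>
    ∑ i ∈ Finset.range l.length,
      if l[i]? = some x then
        (q ^ (((l.drop (i + 1)).map (fun y => brk y x)).sum)) • wd F (l.eraseIdx i)
      else 0

/-- `K`, the algebra automorphism of the free algebra `V` with `K(A) = q²A`, `K(B) = q⁻²B`;
on a word `v = v₁⋯vₙ` it acts as `K(v) = v·q^{⟨v₁,A⟩+⋯+⟨vₙ,A⟩}`. -/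
def Kop (q : F) : FA F →ₗ[F] FA F :=
  mkMap F fun l => (q ^ ((l.map (fun y => brk y lA)).sum)) • wd F l

/-- `K⁻¹`; on a word `v = v₁⋯vₙ` it acts as `K⁻¹(v) = v·q^{⟨v₁,B⟩+⋯+⟨vₙ,B⟩}`. -/
def Kinv (q : F) : FA F →ₗ[F] FA F :=
  mkMap F fun l => (q ^ ((l.map (fun y => brk y lB)).sum)) • wd F l

/-- `T`, the automorphism of the free algebra swapping `A` and `B`. -/
def Top : FA F →ₗ[F] FA F :=
  mkMap F fun l => wd F (l.map (fun x => if x = lA then lB else lA))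

/-- `Â = Q(A_L − K B_R)` and `B̂ = Q(B_L − K⁻¹ A_R)` where `Q = 1 - q²`. -/
def hatOp (q : F) (a : Ltr) : FA F →ₗ[F] FA F :=
  if a = lA then (1 - q ^ 2) • (AL F - Kop F q ∘ₗ BR F)
  else (1 - q ^ 2) • (BL F - Kinv F q ∘ₗ AR F)

def phiW (q : F) : List Ltr → FA F
  | [] => 1
  | a :: t => hatOp F q a (phiW q t)

/-- The map `φ`: `φ(1) = 1` and `φ(v₁⋯vₙ) = v̂₁v̂₂⋯v̂ₙ(1)`. -/
def phi (q : F) : FA F →ₗ[F] FA F := mkMap F fun l => phiW F q l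

/-- `ψ = K B_R A*_L + K⁻¹ A_R B*_L`. -/
def psi (q : F) : FA F →ₗ[F] FA F :=
  Kop F q ∘ₗ BR F ∘ₗ delL F lA + Kinv F q ∘ₗ AR F ∘ₗ delL F lB

/-- `V_n`, the span of the words of length `n`. -/
def Vn (n : ℕ) : Submodule F (FA F) :=
  Submodule.span F { x | ∃ l : List Ltr, l.length = n ∧ x = wd F l }

/-- `J⁺ = A³B − [3]_q A²BA + [3]_q ABA² − BA³`. -/
def Jp (q : F) : FA F :=
  Agen F ^ 3 * Bgen F - tri F q • (Agen F ^ 2 * Bgen F * Agen F)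
    + tri F q • (Agen F * Bgen F * Agen F ^ 2) - Bgen F * Agen F ^ 3

/-- `J⁻ = B³A − [3]_q B²AB + [3]_q BAB² − AB³`. -/
def Jm (q : F) : FA F :=
  Bgen F ^ 3 * Agen F - tri F q • (Bgen F ^ 2 * Agen F * Bgen F)
    + tri F q • (Bgen F * Agen F * Bgen F ^ 2) - Agen F * Bgen F ^ 3

/-- `J`, the two-sided ideal of the free algebra generated by `J⁺` and `J⁻`
(realized as the `F`-span of the elements `a·J^±·b`). -/
def Jsub (q : F) : Submodule F (FA F) :=
  Submodule.span F { x | ∃ a b : FA F, x = a * Jp F q * b ∨ x = a * Jm F q * b }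

/-- `U`, the subalgebra of the q-shuffle algebra `(V,⋆)` generated by `A` and `B`,
realized as the span of all `⋆`-products of the letters. -/
def Usub (q : F) : Submodule F (FA F) :=
  Submodule.span F (Set.range fun l : List Ltr => thetaW F q l)

/-- A `□_q`-module structure on an `F`-vector space `M`: four operators
`x₀, x₁, x₂, x₃` (indices mod 4) satisfying the q-Weyl and q-Serre relations. -/
structure SqAct (q : F) (M : Type*) [AddCommGroup M] [Module F M] where
  x : ZMod 4 → Module.End F M
  weyl : ∀ i : ZMod 4,
    q • (x i * x (i + 1)) - q⁻¹ • (x (i + 1) * x i) = (q - q⁻¹) • (1 : Module.End F M)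
  serre : ∀ i : ZMod 4,
    x i ^ 3 * x (i + 2) - tri F q • (x i ^ 2 * x (i + 2) * x i)
      + tri F q • (x i * x (i + 2) * x i ^ 2) - x (i + 2) * x i ^ 3 = 0

variable {F} {q : F} {M : Type*} [AddCommGroup M] [Module F M]

/-- A `□_q`-module `M` is generated by `ξ` if no proper submodule
(subspace invariant under all the `xᵢ`) contains `ξ`. -/
def SqAct.Gen (S : SqAct F q M) (ξ : M) : Prop :=
  ∀ W : Submodule F M, (∀ i : ZMod 4, ∀ m ∈ W, S.x i m ∈ W) → ξ ∈ W → W = ⊤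

/-- `W_n`: the span of the vectors `u₁u₂⋯uₙ·ξ` with each `uᵢ ∈ {x₀, x₂}`. -/
def SqAct.Wn (S : SqAct F q M) (ξ : M) (n : ℕ) : Submodule F M :=
  Submodule.span F
    { m | ∃ l : List (ZMod 4), l.length = n ∧ (∀ i ∈ l, i = 0 ∨ i = 2) ∧
        m = l.foldr (fun i acc => S.x i acc) ξ }

end SqPaper

namespace SqPaper
variable {F : Type*} [Field F]

lemma mkMap_wd {M : Type*} [AddCommMonoid M] [Module F M]
    (f : List Ltr → M) (l : List Ltr) : mkMap F f (wd F l) = f l := by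
  change (Finsupp.lsum F fun w => LinearMap.toSpanSingleton F M (f (FreeMonoid.toList w)))
      (Finsupp.single (FreeMonoid.ofList l) 1) = f l
  rw [Finsupp.lsum_single, LinearMap.toSpanSingleton_apply, one_smul,
    FreeMonoid.toList_ofList]

lemma theta_wd (q : F) (l : List Ltr) : theta F q (wd F l) = thetaW F q l := mkMap_wd _ _

lemma qshuf_wd (q : F) (u v : List Ltr) :
    qshuf F q (wd F u) (wd F v) = shufW F q u v := by
  rw [qshuf, mkMap_wd, mkMap_wd]

lemma wd_mul (l l' : List Ltr) : wd F l * wd F l' = wd F (l ++ l') := by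
  rw [wd, wd, wd, MonoidAlgebra.single_mul_single, one_mul]
  rfl

lemma wd_nil : wd F [] = 1 := rfl

end SqPaper
namespace SqPaper
variable {F : Type*} [Field F]

lemma shufW_nil (q : F) (v : List Ltr) : shufW F q [] v = wd F v := by
  cases v <;> rw [shufW]

lemma shufW_single (q : F) (hq : q ≠ 0) (a : Ltr) (w : List Ltr) :
    shufW F q [a] w = ∑ i ∈ Finset.range (w.length + 1),
      (q ^ (((w.take i).map (fun y => brk a y)).sum)) • wd F (w.insertIdx i a) := by
  induction w with
  | nil => simp [shufW]
  | cons b v ih =>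
    rw [shufW, shufW_nil, wd_mul, ih, Finset.mul_sum, Finset.smul_sum]
    conv_rhs => rw [Finset.sum_range_succ']
    rw [add_comm]
    congr 1
    · apply Finset.sum_congr rfl
      intro i _
      rw [mul_smul_comm, smul_smul, ← zpow_add₀ hq, wd_mul]
      simp [List.take_succ_cons, List.insertIdx_succ_cons]
    · simp

end SqPaper
namespace SqPaper

/-- The permutation of `Fin (n+1)` sending `i ↦ 0` and `i.succAbove j ↦ (τ j).succ`. -/
def insPerm {n : ℕ} (i : Fin (n + 1)) (τ : Equiv.Perm (Fin n)) : Equiv.Perm (Fin (n + 1)) :=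
  (finSuccEquiv' i).trans ((Equiv.optionCongr τ).trans (finSuccEquiv n).symm)

@[simp] lemma insPerm_self {n : ℕ} (i : Fin (n + 1)) (τ : Equiv.Perm (Fin n)) :
    insPerm i τ i = 0 := by
  simp [insPerm, finSuccEquiv'_at]

@[simp] lemma insPerm_succAbove {n : ℕ} (i : Fin (n + 1)) (τ : Equiv.Perm (Fin n)) (j : Fin n) :
    insPerm i τ (i.succAbove j) = (τ j).succ := by
  simp [insPerm, finSuccEquiv'_succAbove]

lemma insPerm_bij {n : ℕ} :
    Function.Bijective (fun p : Equiv.Perm (Fin n) × Fin (n + 1) => insPerm p.2 p.1) := by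
  rw [Fintype.bijective_iff_injective_and_card]
  constructor
  · rintro ⟨τ, i⟩ ⟨τ', i'⟩ h
    simp only at h
    have hi : i = i' := by
      apply (insPerm i τ).injective
      rw [insPerm_self, h, insPerm_self]
    subst hi
    have hτ : τ = τ' := by
      ext j
      have : insPerm i τ (i.succAbove j) = insPerm i τ' (i.succAbove j) := by rw [h]
      rw [insPerm_succAbove, insPerm_succAbove] at this
      exact congrArg Fin.val (Fin.succ_injective _ this)
    rw [hτ]
  · simp [Fintype.card_perm, Fintype.card_fin, Nat.factorial_succ, mul_comm]

lemma ofFn_insertIdx {α : Type*} {n : ℕ} (f : Fin (n + 1) → α) (i : Fin (n + 1)) :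
    List.ofFn f = (List.ofFn (fun j => f (i.succAbove j))).insertIdx i (f i) := by
  have hi : (i : ℕ) ≤ n := Nat.lt_succ_iff.mp i.isLt
  have hlen : (i : ℕ) ≤ (List.ofFn (fun j => f (i.succAbove j))).length := by
    simpa using hi
  apply List.ext_getElem
  · simp [List.length_insertIdx_of_le_length hlen]
  · intro k h1 h2
    simp only [List.length_ofFn] at h1
    rcases lt_trichotomy k (i : ℕ) with hk | hk | hk
    · rw [List.getElem_insertIdx_of_lt hk]
      rw [List.getElem_ofFn, List.getElem_ofFn]
      congr 1
      rw [Fin.succAbove_of_castSucc_lt]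
      · exact Fin.ext rfl
      · rw [Fin.lt_iff_val_lt_val]; simpa using hk
    · subst hk
      rw [List.getElem_insertIdx_self, List.getElem_ofFn]
    · obtain ⟨k0, rfl⟩ : ∃ k0, k = (i : ℕ) + k0 + 1 := ⟨k - i - 1, by omega⟩
      rw [List.getElem_insertIdx_add_succ _ _ _ _ (by simpa using by omega)]
      rw [List.getElem_ofFn, List.getElem_ofFn]
      congr 1
      rw [Fin.succAbove_of_le_castSucc]
      · exact Fin.ext rfl
      · rw [Fin.le_iff_val_le_val]; simp

lemma take_map_sum (g : Ltr → ℤ) : ∀ (l : List Ltr) (i : ℕ),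
    ((l.take i).map g).sum =
      ∑ j ∈ Finset.range l.length, if j < i then g (l.getD j lA) else 0
  | [], i => by simp
  | a :: l, 0 => by simp
  | a :: l, i + 1 => by
    rw [List.take_succ_cons, List.map_cons, List.sum_cons, take_map_sum g l i,
      List.length_cons, Finset.sum_range_succ']
    simp [Nat.succ_lt_succ_iff, add_comm]

end SqPaper
namespace SqPaper

lemma brk_comm (x y : Ltr) : brk x y = brk y x := by
  unfold brk
  rcases eq_or_ne x y with h | h
  · simp [h]
  · simp [h, Ne.symm h]

lemma insPerm_exp {n : ℕ} (v : Fin (n + 1) → Ltr) (i : Fin (n + 1)) (τ : Equiv.Perm (Fin n)) :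
    (∑ p ∈ Finset.filter
        (fun p : Fin (n+1) × Fin (n+1) => p.1 < p.2 ∧ insPerm i τ p.2 < insPerm i τ p.1)
        Finset.univ, brk (v (insPerm i τ p.1)) (v (insPerm i τ p.2)))
    = (∑ p ∈ Finset.filter
        (fun p : Fin n × Fin n => p.1 < p.2 ∧ τ p.2 < τ p.1) Finset.univ,
        brk (v ((τ p.1).succ)) (v ((τ p.2).succ)))
      + ∑ j : Fin n, if (j : ℕ) < (i : ℕ) then brk (v 0) (v ((τ j).succ)) else 0 := by
  rw [Finset.sum_filter, Finset.sum_filter]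
  rw [← Fintype.sum_equiv
      (Equiv.prodCongr (finSuccEquiv' i).symm (finSuccEquiv' i).symm)
      (fun o : Option (Fin n) × Option (Fin n) =>
        if ((finSuccEquiv' i).symm o.1 : Fin (n+1)) < (finSuccEquiv' i).symm o.2 ∧
            insPerm i τ ((finSuccEquiv' i).symm o.2) < insPerm i τ ((finSuccEquiv' i).symm o.1)
        then brk (v (insPerm i τ ((finSuccEquiv' i).symm o.1)))
          (v (insPerm i τ ((finSuccEquiv' i).symm o.2))) else 0)
      _ (fun o => rfl)]
  rw [Fintype.sum_prod_type]
  simp only [Fintype.sum_option, Equiv.prodCongr_apply, finSuccEquiv'_symm_none,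
    finSuccEquiv'_symm_some, insPerm_self, insPerm_succAbove, lt_self_iff_false, false_and,
    and_false, if_false, Fin.not_lt_zero, Fin.succ_pos, and_true,
    Fin.succAbove_lt_iff_castSucc_lt, Fin.succAbove_lt_succAbove_iff, Fin.succ_lt_succ_iff,
    zero_add, Finset.sum_const_zero]
  rw [Finset.sum_add_distrib, Fintype.sum_prod_type, add_comm]
  congr 1
  apply Finset.sum_congr rfl
  intro j _
  rw [brk_comm]
  simp only [Fin.lt_iff_val_lt_val, Fin.coe_castSucc]

end SqPaper
namespace SqPaper
variable {F : Type*} [Field F]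

lemma take_map_sum_ofFn {n : ℕ} (u : Fin n → Ltr) (a : Ltr) (i : ℕ) :
    (((List.ofFn u).take i).map (fun y => brk a y)).sum
      = ∑ j : Fin n, if (j : ℕ) < i then brk a (u j) else 0 := by
  rw [take_map_sum, List.length_ofFn,
    ← Fin.sum_univ_eq_sum_range
      (fun j => if j < i then brk a ((List.ofFn u).getD j lA) else 0) n]
  apply Finset.sum_congr rfl
  intro j _
  by_cases h : (j : ℕ) < i
  · rw [if_pos h, if_pos h, List.getD_eq_getElem _ _ (by simp), List.getElem_ofFn]
  · rw [if_neg h, if_neg h]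

lemma thetaW_ofFn (q : F) (hq : q ≠ 0) (n : ℕ) : ∀ (v : Fin n → Ltr),
    thetaW F q (List.ofFn v) =
      ∑ σ : Equiv.Perm (Fin n),
        (q ^ (∑ p ∈ Finset.filter
              (fun p : Fin n × Fin n => p.1 < p.2 ∧ σ p.2 < σ p.1) Finset.univ,
            brk (v (σ p.1)) (v (σ p.2)))) •
          wd F (List.ofFn fun i => v (σ i)) := by
  induction n with
  | zero =>
    intro v
    rw [List.ofFn_zero]
    have h1 : thetaW F q [] = 1 := by rw [thetaW]
    rw [h1]
    simp [wd, MonoidAlgebra.one_def]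
  | succ n ih =>
    intro v
    rw [List.ofFn_succ]
    rw [thetaW, ih (fun j => v j.succ), map_sum]
    simp only [map_smul, qshuf_wd, shufW_single q hq, List.length_ofFn, Finset.smul_sum,
      smul_smul]
    simp only [← Fin.sum_univ_eq_sum_range]
    rw [← Fintype.sum_prod_type']
    refine Fintype.sum_bijective _ insPerm_bij _ _ ?_
    rintro ⟨τ, i⟩
    simp only
    rw [take_map_sum_ofFn, ← zpow_add₀ hq, ← insPerm_exp v i τ]
    congr 1
    rw [ofFn_insertIdx (fun k => v (insPerm i τ k)) i]
    simp only [insPerm_self, insPerm_succAbove]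

end SqPaper

open SqPaper in
/-- the action of `θ` on a word, as a sum over permutations weighted by inversions. -/
theorem theta_apply_word (F : Type*) [Field F] (q : F) (hq : q ≠ 0)
    (hq1 : ∀ k : ℕ, 0 < k → q ^ k ≠ 1) (n : ℕ) (hn : 1 ≤ n) (v : Fin n → Ltr) :
    theta F q (wd F (List.ofFn v)) =
      ∑ σ : Equiv.Perm (Fin n),
        (q ^ (∑ p ∈ Finset.filter
              (fun p : Fin n × Fin n => p.1 < p.2 ∧ σ p.2 < σ p.1) Finset.univ,
            brk (v (σ p.1)) (v (σ p.2)))) •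
          wd F (List.ofFn fun i => v (σ i)) := by
  rw [theta_wd, thetaW_ofFn q hq n v]
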